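/- Let Q be an irreducible rate matrix on N states with stationary distribution μ (all μ_i > 0), r = min_i μ_i, M = max_{i≠j} q_ij. Let α < 2, α ≠ 0, 1, and let p(t) solve the master equation dp_i/dt = Σ_j p_j q_ji with all p_i(t) > 0. Then the dissipation rate of the Tsallis free energy F_α(t) = (1/(α(α−1)))·[Σ_i p_i(t)·(p_i(t)/μ_i)^(α−1) − 1] satisfies −dF_α/dt ≥ (r^(4−2α)/(2MN))·Σ_i [Σ_{j≠i}(p_j q_ji − p_i q_ij)]². -/

import Mathlib

open Finset


lemma slope_ge {α b x c : ℝ} (hα2 : α < 2) (hα1 : α ≠ 1) (hb : 0 < b) (hbx : b ≤ x)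
    (hxc : x ≤ c) :
    c ^ (α - 2) * (x - b) ≤ (x ^ (α - 1) - b ^ (α - 1)) / (α - 1) := by
  rcases eq_or_lt_of_le hbx with rfl | h
  · simp
  have hx0 : 0 < x := hb.trans h
  have hne1 : α - 1 ≠ 0 := sub_ne_zero.mpr hα1
  obtain ⟨ξ, hξ, hslope⟩ := exists_hasDerivAt_eq_slope (fun u => u ^ (α - 1))
      (fun u => (α - 1) * u ^ (α - 1 - 1)) h
      (fun u hu => by
        have hu0 : (0:ℝ) < u := lt_of_lt_of_le hb hu.1
        exact (Real.hasDerivAt_rpow_const (p := α - 1)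
          (Or.inl hu0.ne')).continuousAt.continuousWithinAt)
      (fun u hu => Real.hasDerivAt_rpow_const (Or.inl (hb.trans hu.1).ne'))
  have hξ0 : 0 < ξ := hb.trans hξ.1
  have hξc : ξ ≤ c := le_of_lt (lt_of_lt_of_le hξ.2 hxc)
  have hxb : x - b ≠ 0 := sub_ne_zero.mpr h.ne'
  rw [eq_div_iff hxb] at hslope
  have he : (x ^ (α - 1) - b ^ (α - 1)) / (α - 1) = ξ ^ (α - 2) * (x - b) := by
    rw [← hslope, show α - 1 - 1 = α - 2 by ring]
    field_simp
  rw [he]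
  have hcx : c ^ (α - 2) ≤ ξ ^ (α - 2) :=
    Real.rpow_le_rpow_of_nonpos hξ0 hξc (by linarith)
  exact mul_le_mul_of_nonneg_right hcx (by linarith)

lemma slope_le {α b x c : ℝ} (hα2 : α < 2) (hα1 : α ≠ 1) (hx : 0 < x) (hxb : x ≤ b)
    (hbc : b ≤ c) :
    (x ^ (α - 1) - b ^ (α - 1)) / (α - 1) ≤ c ^ (α - 2) * (x - b) := by
  have := slope_ge (b := x) (x := b) (c := c) hα2 hα1 hx hxb hbc
  have he : (x ^ (α - 1) - b ^ (α - 1)) / (α - 1)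
      = -((b ^ (α - 1) - x ^ (α - 1)) / (α - 1)) := by ring
  rw [he]
  linarith

lemma hasDerivAt_G {α b c : ℝ} (hα0 : α ≠ 0) (hα1 : α ≠ 1) {x : ℝ} (hx : 0 < x) :
    HasDerivAt (fun u => (u ^ α - b ^ α - α * b ^ (α - 1) * (u - b)) / (α * (α - 1))
        - c ^ (α - 2) * (u - b) ^ 2 / 2)
      ((x ^ (α - 1) - b ^ (α - 1)) / (α - 1) - c ^ (α - 2) * (x - b)) x := by
  have hA : HasDerivAt (fun u : ℝ => u ^ α) (α * x ^ (α - 1)) x :=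
    Real.hasDerivAt_rpow_const (Or.inl hx.ne')
  have h1 := hA.sub_const (b ^ α)
  have h2 : HasDerivAt (fun u : ℝ => α * b ^ (α - 1) * (u - b)) (α * b ^ (α - 1)) x := by
    simpa using (((hasDerivAt_id x).sub_const b).const_mul (α * b ^ (α - 1)))
  have h3 := (h1.sub h2).div_const (α * (α - 1))
  have h4 : HasDerivAt (fun u : ℝ => c ^ (α - 2) * (u - b) ^ 2 / 2) (c ^ (α - 2) * (x - b)) x := by
    have h5 := ((((hasDerivAt_id x).sub_const b).pow 2).const_mul (c ^ (α - 2))).div_const 2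
    refine h5.congr_deriv ?_
    simp
    ring
  have h6 := h3.sub h4
  refine h6.congr_deriv ?_
  have hne1 : α - 1 ≠ 0 := sub_ne_zero.mpr hα1
  congr 1
  field_simp

lemma taylor_bound {α a b c : ℝ} (hα2 : α < 2) (hα0 : α ≠ 0) (hα1 : α ≠ 1)
    (ha : 0 < a) (hb : 0 < b) (hac : a ≤ c) (hbc : b ≤ c) :
    c ^ (α - 2) * (a - b) ^ 2 / 2
      ≤ (a ^ α - b ^ α - α * b ^ (α - 1) * (a - b)) / (α * (α - 1)) := by
  set G : ℝ → ℝ := fun u => (u ^ α - b ^ α - α * b ^ (α - 1) * (u - b)) / (α * (α - 1))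
      - c ^ (α - 2) * (u - b) ^ 2 / 2 with hG
  have hGb : G b = 0 := by simp [hG]
  have key : 0 ≤ G a := by
    rcases lt_trichotomy a b with h | h | h
    · obtain ⟨ξ, hξ, hslope⟩ := exists_hasDerivAt_eq_slope G
        (fun u => (u ^ (α - 1) - b ^ (α - 1)) / (α - 1) - c ^ (α - 2) * (u - b)) h
        (fun u hu => (hasDerivAt_G hα0 hα1
          (lt_of_lt_of_le ha hu.1)).continuousAt.continuousWithinAt)
        (fun u hu => hasDerivAt_G hα0 hα1 (ha.trans hu.1))
      have hξ0 : 0 < ξ := ha.trans hξ.1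
      have hd : (ξ ^ (α - 1) - b ^ (α - 1)) / (α - 1) - c ^ (α - 2) * (ξ - b) ≤ 0 := by
        have := slope_le hα2 hα1 hξ0 (le_of_lt hξ.2) hbc
        linarith
      rw [hGb] at hslope
      rw [eq_div_iff (by intro hc; apply absurd h; linarith [sub_eq_zero.mp hc] : b - a ≠ 0)]
        at hslope
      have hm := mul_nonpos_iff.mpr (Or.inr ⟨hd, (sub_pos.mpr h).le⟩)
      rw [hslope] at hm
      linarith
    · subst h; rw [hGb]
    · obtain ⟨ξ, hξ, hslope⟩ := exists_hasDerivAt_eq_slope G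
        (fun u => (u ^ (α - 1) - b ^ (α - 1)) / (α - 1) - c ^ (α - 2) * (u - b)) h
        (fun u hu => (hasDerivAt_G hα0 hα1
          (lt_of_lt_of_le hb hu.1)).continuousAt.continuousWithinAt)
        (fun u hu => hasDerivAt_G hα0 hα1 (hb.trans hu.1))
      have hξ0 : 0 < ξ := hb.trans hξ.1
      have hξc : ξ ≤ c := le_of_lt (lt_of_lt_of_le hξ.2 hac)
      have hd : 0 ≤ (ξ ^ (α - 1) - b ^ (α - 1)) / (α - 1) - c ^ (α - 2) * (ξ - b) := by
        have := slope_ge hα2 hα1 hb (le_of_lt hξ.1) hξc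
        linarith
      rw [hGb] at hslope
      rw [eq_div_iff (by intro hc; apply absurd h; linarith [sub_eq_zero.mp hc] : a - b ≠ 0)]
        at hslope
      have hm := mul_nonneg hd (sub_pos.mpr h).le
      rw [hslope] at hm
      linarith
  have hGa : G a = (a ^ α - b ^ α - α * b ^ (α - 1) * (a - b)) / (α * (α - 1))
      - c ^ (α - 2) * (a - b) ^ 2 / 2 := rfl
  linarith [hGa ▸ key]

theorem tsallis_dissipation_lower_bound_lt_two (N : ℕ) (q : Fin N → Fin N → ℝ)
    (μ : Fin N → ℝ) (r M α : ℝ) (p : ℝ → Fin N → ℝ)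
    (hq : ∀ i j, i ≠ j → 0 ≤ q i j)
    (hqrow : ∀ i, ∑ j, q i j = 0)
    (hirr : ∀ i j : Fin N, i ≠ j → ∃ (m : ℕ) (c : Fin (m + 1) → Fin N),
      c 0 = i ∧ c (Fin.last m) = j ∧ ∀ k : Fin m, 0 < q (c k.castSucc) (c k.succ))
    (hμpos : ∀ i, 0 < μ i) (hμ1 : ∑ i, μ i = 1)
    (hstat : ∀ j, ∑ i, μ i * q i j = 0)
    (hr : 0 < r) (hrmin : ∀ i, r ≤ μ i)
    (hM : ∀ i j, i ≠ j → q i j ≤ M) (hMpos : 0 < M)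
    (hα2 : α < 2) (hα0 : α ≠ 0) (hα1 : α ≠ 1)
    (hderiv : ∀ i t, HasDerivAt (fun s => p s i) (∑ j, p t j * q j i) t)
    (hppos : ∀ t i, 0 < p t i) (hpsum : ∀ t, ∑ i, p t i = 1) :
    ∀ t D, HasDerivAt (fun s =>
        (1 / (α * (α - 1))) * ((∑ i, p s i * (p s i / μ i) ^ (α - 1)) - 1)) D t →
      -D ≥ (r ^ (4 - 2 * α) / (2 * M * N)) *
        ∑ i, (∑ j ∈ Finset.univ.erase i, (p t j * q j i - p t i * q i j)) ^ 2 := by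
  intro t D hD
  rcases Nat.eq_zero_or_pos N with hN0 | hNpos
  · exfalso; subst hN0; simpa using hμ1
  have hne1 : α - 1 ≠ 0 := sub_ne_zero.mpr hα1
  have hαne : α * (α - 1) ≠ 0 := mul_ne_zero hα0 hne1
  -- derivative identification
  have key : ∀ i : Fin N, HasDerivAt (fun s => p s i * (p s i / μ i) ^ (α - 1))
      (α * ((∑ j, p t j * q j i) * (p t i / μ i) ^ (α - 1))) t := by
    intro i
    have hμi := hμpos i
    have hy : (0:ℝ) < p t i / μ i := div_pos (hppos t i) hμi
    have h1 := hderiv i t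
    have h2 : HasDerivAt (fun s => p s i / μ i) ((∑ j, p t j * q j i) / μ i) t := h1.div_const _
    have h3 := h2.rpow_const (p := α - 1) (Or.inl hy.ne')
    have h4 := h1.mul h3
    refine h4.congr_deriv ?_
    have hrw : (p t i / μ i) ^ (α - 1) = (p t i / μ i) ^ (α - 1 - 1) * (p t i / μ i) := by
      rw [← Real.rpow_add_one hy.ne' (α - 1 - 1)]; ring_nf
    rw [hrw]
    field_simp
    ring
  have hF := ((HasDerivAt.sum (u := univ) (fun i _ => key i)).sub_const 1).const_mul
      (1 / (α * (α - 1)))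
  simp only [Finset.sum_apply] at hF
  have hDeq : D = (1 / (α * (α - 1)))
      * ∑ i, α * ((∑ j, p t j * q j i) * (p t i / μ i) ^ (α - 1)) := hD.unique hF
  -- basic facts
  have hqii : ∀ i, ∑ j ∈ univ.erase i, q i j = - q i i := by
    intro i
    rw [Finset.sum_erase_eq_sub (Finset.mem_univ i), hqrow]
    ring
  have hstat' : ∀ i, ∑ j ∈ univ.erase i, μ j * q j i = - (μ i * q i i) := by
    intro i
    rw [Finset.sum_erase_eq_sub (Finset.mem_univ i), hstat]
    ring
  -- C1 : full-sum drift equals erase-sum current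
  have hC1 : ∀ i, (∑ j, p t j * q j i)
      = ∑ j ∈ univ.erase i, (p t j * q j i - p t i * q i j) := by
    intro i
    rw [Finset.sum_sub_distrib, Finset.sum_erase_eq_sub (Finset.mem_univ i),
      ← Finset.mul_sum, hqii]
    ring
  -- C3 : current in potential form
  have hC3 : ∀ i, (∑ j ∈ univ.erase i, (p t j * q j i - p t i * q i j))
      = ∑ j ∈ univ.erase i, μ j * q j i * (p t j / μ j - p t i / μ i) := by
    intro i
    have e1 : ∀ j ∈ univ.erase i, μ j * q j i * (p t j / μ j - p t i / μ i)
        = p t j * q j i - μ j * q j i * (p t i / μ i) := by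
      intro j _
      have := (hμpos j).ne'
      field_simp
    rw [Finset.sum_congr rfl e1, Finset.sum_sub_distrib, Finset.sum_sub_distrib]
    congr 1
    rw [← Finset.mul_sum, ← Finset.sum_mul, hqii, hstat']
    have := (hμpos i).ne'
    field_simp
  -- C4 : double sum of alpha-power differences vanishes
  have hC4 : ∑ i, ∑ j ∈ univ.erase i,
      μ j * q j i * ((p t j / μ j) ^ α - (p t i / μ i) ^ α) = 0 := by
    have herase : ∀ i : Fin N, ∑ j ∈ univ.erase i,
        μ j * q j i * ((p t j / μ j) ^ α - (p t i / μ i) ^ α)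
        = ∑ j, μ j * q j i * ((p t j / μ j) ^ α - (p t i / μ i) ^ α) := by
      intro i
      rw [Finset.sum_erase_eq_sub (Finset.mem_univ i)]
      simp
    rw [Finset.sum_congr rfl (fun i _ => herase i)]
    have split : ∀ i j : Fin N, μ j * q j i * ((p t j / μ j) ^ α - (p t i / μ i) ^ α)
        = μ j * (p t j / μ j) ^ α * q j i - (μ j * q j i) * (p t i / μ i) ^ α := by
      intro i j; ring
    simp_rw [split, Finset.sum_sub_distrib]
    rw [Finset.sum_comm (γ := Fin N) (f := fun i j => μ j * (p t j / μ j) ^ α * q j i)]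
    simp_rw [← Finset.mul_sum, ← Finset.sum_mul]
    simp [hqrow, hstat]
  -- C5 : -D as entropy production double sum
  have hC5 : -D = ∑ i, ∑ j ∈ univ.erase i, μ j * q j i *
      (((p t j / μ j) ^ α - (p t i / μ i) ^ α
        - α * (p t i / μ i) ^ (α - 1) * (p t j / μ j - p t i / μ i)) / (α * (α - 1))) := by
    have hsplit : ∀ i : Fin N, ∀ j ∈ univ.erase i, μ j * q j i *
        (((p t j / μ j) ^ α - (p t i / μ i) ^ α
          - α * (p t i / μ i) ^ (α - 1) * (p t j / μ j - p t i / μ i)) / (α * (α - 1)))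
        = (1 / (α * (α - 1))) * (μ j * q j i * ((p t j / μ j) ^ α - (p t i / μ i) ^ α))
          - (1 / (α * (α - 1))) *
            (α * (p t i / μ i) ^ (α - 1) * (μ j * q j i * (p t j / μ j - p t i / μ i))) := by
      intro i j _
      field_simp
    rw [Finset.sum_congr rfl (fun i _ => Finset.sum_congr rfl (hsplit i))]
    simp_rw [Finset.sum_sub_distrib, ← Finset.mul_sum]
    rw [hC4]
    have hrw2 : (∑ i, α * (p t i / μ i) ^ (α - 1)
          * ∑ j ∈ univ.erase i, μ j * q j i * (p t j / μ j - p t i / μ i))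
        = ∑ i, α * ((∑ j, p t j * q j i) * (p t i / μ i) ^ (α - 1)) :=
      Finset.sum_congr rfl (fun i _ => by rw [← hC3 i, ← hC1 i]; ring)
    rw [hrw2, hDeq, Finset.mul_sum]
    simp
  -- bounds on y = p/μ
  have hypos : ∀ k, 0 < p t k / μ k := fun k => div_pos (hppos t k) (hμpos k)
  have hp1 : ∀ k, p t k ≤ 1 := by
    intro k
    rw [← hpsum t]
    exact Finset.single_le_sum (fun j _ => (hppos t j).le) (Finset.mem_univ k)
  have hyle : ∀ k, p t k / μ k ≤ r⁻¹ := by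
    intro k
    rw [div_le_iff₀ (hμpos k)]
    have h1 : r * r⁻¹ = 1 := mul_inv_cancel₀ hr.ne'
    nlinarith [hrmin k, inv_pos.mpr hr, hp1 k]
  have hcoef : (r⁻¹ : ℝ) ^ (α - 2) = r ^ (2 - α) := by
    rw [Real.inv_rpow hr.le, ← Real.rpow_neg hr.le, neg_sub]
  -- termwise Taylor bound
  have hTB : ∀ i : Fin N, ∀ j ∈ univ.erase i,
      r ^ (2 - α) / 2 * (μ j * q j i * (p t j / μ j - p t i / μ i) ^ 2)
      ≤ μ j * q j i * (((p t j / μ j) ^ α - (p t i / μ i) ^ α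
          - α * (p t i / μ i) ^ (α - 1) * (p t j / μ j - p t i / μ i)) / (α * (α - 1))) := by
    intro i j hj
    have hnn : 0 ≤ μ j * q j i :=
      mul_nonneg (hμpos j).le (hq j i (Finset.mem_erase.mp hj).1)
    have tb := taylor_bound (c := r⁻¹) hα2 hα0 hα1 (hypos j) (hypos i) (hyle j) (hyle i)
    have h2 := mul_le_mul_of_nonneg_left tb hnn
    calc r ^ (2 - α) / 2 * (μ j * q j i * (p t j / μ j - p t i / μ i) ^ 2)
        = μ j * q j i * ((r⁻¹ : ℝ) ^ (α - 2) * (p t j / μ j - p t i / μ i) ^ 2 / 2) := by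
          rw [hcoef]; ring
      _ ≤ _ := h2
  -- Cauchy–Schwarz
  have hCS : ∀ i : Fin N, (∑ j ∈ univ.erase i, (p t j * q j i - p t i * q i j)) ^ 2
      ≤ M * ∑ j ∈ univ.erase i, μ j * q j i * (p t j / μ j - p t i / μ i) ^ 2 := by
    intro i
    rw [hC3 i]
    have hnn : ∀ j ∈ univ.erase i, 0 ≤ μ j * q j i := fun j hj =>
      mul_nonneg (hμpos j).le (hq j i (Finset.mem_erase.mp hj).1)
    have cs := Finset.sum_mul_sq_le_sq_mul_sq (univ.erase i)
      (fun j => Real.sqrt (μ j * q j i))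
      (fun j => Real.sqrt (μ j * q j i) * (p t j / μ j - p t i / μ i))
    have e1 : ∑ j ∈ univ.erase i, Real.sqrt (μ j * q j i) *
        (Real.sqrt (μ j * q j i) * (p t j / μ j - p t i / μ i))
        = ∑ j ∈ univ.erase i, μ j * q j i * (p t j / μ j - p t i / μ i) :=
      Finset.sum_congr rfl fun j hj => by
        rw [← mul_assoc, Real.mul_self_sqrt (hnn j hj)]
    have e2 : ∑ j ∈ univ.erase i, Real.sqrt (μ j * q j i) ^ 2
        = ∑ j ∈ univ.erase i, μ j * q j i :=
      Finset.sum_congr rfl fun j hj => Real.sq_sqrt (hnn j hj)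
    have e3 : ∑ j ∈ univ.erase i, (Real.sqrt (μ j * q j i) * (p t j / μ j - p t i / μ i)) ^ 2
        = ∑ j ∈ univ.erase i, μ j * q j i * (p t j / μ j - p t i / μ i) ^ 2 :=
      Finset.sum_congr rfl fun j hj => by rw [mul_pow, Real.sq_sqrt (hnn j hj)]
    rw [e1, e2, e3] at cs
    refine le_trans cs (mul_le_mul_of_nonneg_right ?_ ?_)
    · calc ∑ j ∈ univ.erase i, μ j * q j i ≤ ∑ j ∈ univ.erase i, μ j * M :=
          Finset.sum_le_sum fun j hj =>
            mul_le_mul_of_nonneg_left (hM j i (Finset.mem_erase.mp hj).1) (hμpos j).le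
        _ = (∑ j ∈ univ.erase i, μ j) * M := by rw [Finset.sum_mul]
        _ ≤ 1 * M := by
            refine mul_le_mul_of_nonneg_right ?_ hMpos.le
            rw [← hμ1]
            exact Finset.sum_le_sum_of_subset_of_nonneg (Finset.erase_subset i univ)
              (fun j _ _ => (hμpos j).le)
        _ = M := one_mul M
    · exact Finset.sum_nonneg fun j hj => mul_nonneg (hnn j hj) (sq_nonneg _)
  -- assembly
  have hDS : r ^ (2 - α) / 2
      * ∑ i, ∑ j ∈ univ.erase i, μ j * q j i * (p t j / μ j - p t i / μ i) ^ 2 ≤ -D := by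
    rw [hC5, Finset.mul_sum]
    refine Finset.sum_le_sum fun i _ => ?_
    rw [Finset.mul_sum]
    exact Finset.sum_le_sum (hTB i)
  have hJS : ∑ i, (∑ j ∈ univ.erase i, (p t j * q j i - p t i * q i j)) ^ 2
      ≤ M * ∑ i, ∑ j ∈ univ.erase i, μ j * q j i * (p t j / μ j - p t i / μ i) ^ 2 := by
    rw [Finset.mul_sum]
    exact Finset.sum_le_sum fun i _ => hCS i
  have hJnn : (0:ℝ) ≤ ∑ i, (∑ j ∈ univ.erase i, (p t j * q j i - p t i * q i j)) ^ 2 :=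
    Finset.sum_nonneg fun i _ => sq_nonneg _
  have hr1 : r ≤ 1 := by
    have hi0 : r ≤ μ ⟨0, hNpos⟩ := hrmin _
    have := Finset.single_le_sum (fun j (_ : j ∈ univ) => (hμpos j).le)
      (Finset.mem_univ (⟨0, hNpos⟩ : Fin N))
    rw [hμ1] at this
    linarith
  have hN1 : (1:ℝ) ≤ (N:ℝ) := by exact_mod_cast hNpos
  have hNpos' : (0:ℝ) < (N:ℝ) := by linarith
  have hcoef2 : r ^ (4 - 2*α) / (2*M*(N:ℝ)) ≤ r ^ (2-α) / (2*M) := by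
    rw [div_le_div_iff₀ (by positivity) (by positivity)]
    have h44 : r ^ (4-2*α) = r ^ (2-α) * r ^ (2-α) := by
      rw [← Real.rpow_add hr]; ring_nf
    have hle1 : r ^ (2-α) ≤ 1 := Real.rpow_le_one hr.le hr1 (by linarith)
    have hpow_nonneg : (0:ℝ) ≤ r ^ (2-α) := (Real.rpow_pos_of_pos hr _).le
    rw [h44]
    have hxx : r ^ (2-α) * r ^ (2-α) ≤ r ^ (2-α) * (N:ℝ) := by nlinarith
    nlinarith [hxx, hMpos]
  rw [ge_iff_le]
  calc r ^ (4 - 2*α) / (2*M*(N:ℝ))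
        * ∑ i, (∑ j ∈ univ.erase i, (p t j * q j i - p t i * q i j)) ^ 2
      ≤ r ^ (2-α) / (2*M)
        * ∑ i, (∑ j ∈ univ.erase i, (p t j * q j i - p t i * q i j)) ^ 2 :=
        mul_le_mul_of_nonneg_right hcoef2 hJnn
    _ ≤ r ^ (2-α) / (2*M)
        * (M * ∑ i, ∑ j ∈ univ.erase i, μ j * q j i * (p t j / μ j - p t i / μ i) ^ 2) :=
        mul_le_mul_of_nonneg_left hJS (by positivity)
    _ = r ^ (2-α) / 2
        * ∑ i, ∑ j ∈ univ.erase i, μ j * q j i * (p t j / μ j - p t i / μ i) ^ 2 := by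
        field_simp
    _ ≤ -D := hDS
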